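/- Let 0 < α < 1, T > 0, N a positive integer, and r ≥ 1, and let p^{(n)}_{n−i} be the coefficients built from the L1 weights on the graded mesh t_n = T(n/N)^r. Then for every n = 1, 2, ..., N one has Σ_{s=1}^{n} p^{(n)}_{n−s} · t_s^{−α}/Γ(1−α) ≤ 1. -/

import Mathlib

noncomputable section

open Finset Real

lemma slope_lower {β a b : ℝ} (hβ0 : 0 < β) (hβ1 : β ≤ 1) (ha : 0 ≤ a) (hab : a < b) :
    β * b ^ (β - 1) * (b - a) ≤ b ^ β - a ^ β := by
  have hb : 0 < b := ha.trans_lt hab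
  have hs : -1 ≤ a / b - 1 := by
    have : 0 ≤ a / b := div_nonneg ha hb.le
    linarith
  have h := rpow_one_add_le_one_add_mul_self hs hβ0.le hβ1
  rw [add_sub_cancel] at h
  rw [Real.div_rpow ha hb.le] at h
  have hbp : (0:ℝ) < b ^ β := Real.rpow_pos_of_pos hb β
  have key : a ^ β ≤ (1 + β * (a / b - 1)) * b ^ β := (div_le_iff₀ hbp).mp h
  have h1 : b ^ β = b ^ (β - 1) * b := by
    rw [← Real.rpow_add_one hb.ne' (β - 1)]; ring_nf
  have hexp : (1 + β * (a / b - 1)) * b ^ β = b ^ β - β * b ^ (β - 1) * (b - a) := by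
    rw [h1]; field_simp; ring
  rw [hexp] at key; linarith

lemma slope_upper {β a b : ℝ} (hβ0 : 0 < β) (hβ1 : β ≤ 1) (ha : 0 < a) (hab : a ≤ b) :
    b ^ β - a ^ β ≤ β * a ^ (β - 1) * (b - a) := by
  have hs : -1 ≤ b / a - 1 := by
    have : 0 ≤ b / a := div_nonneg (ha.le.trans hab) ha.le
    linarith
  have h := rpow_one_add_le_one_add_mul_self hs hβ0.le hβ1
  rw [add_sub_cancel] at h
  rw [Real.div_rpow (ha.le.trans hab) ha.le] at h
  have hap : (0:ℝ) < a ^ β := Real.rpow_pos_of_pos ha β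
  have key : b ^ β ≤ (1 + β * (b / a - 1)) * a ^ β := (div_le_iff₀ hap).mp h
  have h1 : a ^ β = a ^ (β - 1) * a := by
    rw [← Real.rpow_add_one ha.ne' (β - 1)]; ring_nf
  have hexp : (1 + β * (b / a - 1)) * a ^ β = a ^ β + β * a ^ (β - 1) * (b - a) := by
    rw [h1]; field_simp
  rw [hexp] at key; linarith


/-- The graded mesh `t_n = T (n/N)^r` on `[0,T]`. -/
def gmesh (T r : ℝ) (N n : ℕ) : ℝ := T * ((n : ℝ) / (N : ℝ)) ^ r

/-- The step sizes `τ_n = t_n - t_{n-1}` of the graded mesh. -/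
def gstep (T r : ℝ) (N n : ℕ) : ℝ := gmesh T r N n - gmesh T r N (n - 1)

/-- The L1 weights
`d_{n,k} = ((t_n − t_{n−k})^{1−α} − (t_n − t_{n−k+1})^{1−α})/τ_{n−k+1}`. -/
def L1w (α T r : ℝ) (N n k : ℕ) : ℝ :=
  ((gmesh T r N n - gmesh T r N (n - k)) ^ (1 - α)
      - (gmesh T r N n - gmesh T r N (n - k + 1)) ^ (1 - α)) / gstep T r N (n - k + 1)

/-- The coefficients `b^{(n)}_{n−i} = d_{n,n−i+1}/Γ(2−α)`; here `bcoef α T r N n i`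
denotes `b^{(n)}_{n-i}`. -/
def bcoef (α T r : ℝ) (N n i : ℕ) : ℝ := L1w α T r N n (n - i + 1) / Real.Gamma (2 - α)

section mesh
variable {T r : ℝ} {N : ℕ} (hT : 0 < T) (hr : 1 ≤ r) (hN : 0 < N)
include hT hr hN

lemma gmesh_lt {j k : ℕ} (h : j < k) : gmesh T r N j < gmesh T r N k := by
  unfold gmesh
  have hN' : (0:ℝ) < N := by exact_mod_cast hN
  apply mul_lt_mul_of_pos_left _ hT
  apply Real.rpow_lt_rpow (by positivity) _ (by linarith)
  exact div_lt_div_of_pos_right (by exact_mod_cast h) hN'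

lemma gmesh_zero : gmesh T r N 0 = 0 := by
  unfold gmesh
  rw [Nat.cast_zero, zero_div, Real.zero_rpow (by linarith), mul_zero]

lemma gmesh_pos {k : ℕ} (h : 1 ≤ k) : 0 < gmesh T r N k := by
  have := gmesh_lt hT hr hN (show 0 < k from h)
  rwa [gmesh_zero hT hr hN] at this

lemma gmesh_nonneg (k : ℕ) : 0 ≤ gmesh T r N k := by
  rcases Nat.eq_zero_or_pos k with rfl | h
  · rw [gmesh_zero hT hr hN]
  · exact (gmesh_pos hT hr hN h).le

lemma gstep_pos {k : ℕ} (h : 1 ≤ k) : 0 < gstep T r N k := by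
  unfold gstep
  have := gmesh_lt hT hr hN (show k - 1 < k by omega)
  linarith

end mesh

section bc
variable {α T r : ℝ} {N : ℕ}

lemma bcoef_eq {k i : ℕ} (h1 : 1 ≤ i) (h2 : i ≤ k) :
    bcoef α T r N k i =
      ((gmesh T r N k - gmesh T r N (i - 1)) ^ (1 - α)
        - (gmesh T r N k - gmesh T r N i) ^ (1 - α)) / gstep T r N i / Real.Gamma (2 - α) := by
  unfold bcoef L1w
  have e1 : k - (k - i + 1) = i - 1 := by omega
  have e2 : k - (k - i + 1) + 1 = i := by omega
  rw [e1, show i - 1 + 1 = i from by omega]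

end bc

section bineq
variable {α T r : ℝ} {N : ℕ} (hα0 : 0 < α) (hα1 : α < 1) (hT : 0 < T) (hr : 1 ≤ r) (hN : 0 < N)
include hα0 hα1 hT hr hN

lemma Gamma2_pos : 0 < Real.Gamma (2 - α) := Real.Gamma_pos_of_pos (by linarith)

lemma bcoef_mono {k i : ℕ} (h1 : 1 ≤ i) (h2 : i + 1 ≤ k) :
    bcoef α T r N k i ≤ bcoef α T r N k (i + 1) := by
  set β := 1 - α with hβ
  have hβ0 : 0 < β := by simp [hβ]; linarith
  have hβ1 : β ≤ 1 := by simp [hβ]; linarith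
  set a := gmesh T r N k - gmesh T r N (i + 1) with hadef
  set b := gmesh T r N k - gmesh T r N i with hbdef
  set c := gmesh T r N k - gmesh T r N (i - 1) with hcdef
  have hab : a < b := by
    have := gmesh_lt hT hr hN (show i < i + 1 by omega) (N := N); simp [hadef, hbdef]; linarith
  have hbc : b < c := by
    have := gmesh_lt hT hr hN (show i - 1 < i by omega) (N := N); simp [hbdef, hcdef]; linarith
  have ha : 0 ≤ a := by
    rcases Nat.eq_or_lt_of_le h2 with h | h
    · simp [hadef, ← h]
    · have := gmesh_lt hT hr hN (show i + 1 < k from h) (N := N); simp [hadef]; linarith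
  have hb : 0 < b := ha.trans_lt hab
  have hstep1 : gstep T r N (i+1) = b - a := by
    unfold gstep; simp only [hadef, hbdef, show i+1-1 = i from by omega]; ring
  have hstep2 : gstep T r N i = c - b := by
    unfold gstep; simp only [hbdef, hcdef]; ring
  rw [bcoef_eq h1 (by omega), bcoef_eq (by omega) h2, show i + 1 - 1 = i from by omega,
    hstep1, hstep2]
  rw [← hadef, ← hbdef, ← hcdef]
  have hΓ := Gamma2_pos hα0 hα1 hT hr hN (T := T) (r := r) (N := N)
  apply div_le_div_of_nonneg_right _ hΓ.le
  have low := slope_lower hβ0 hβ1 ha hab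
  have upp := slope_upper hβ0 hβ1 hb hbc.le
  rw [div_le_iff₀ (by linarith), div_mul_eq_mul_div, le_div_iff₀ (by linarith)]
  have h3 : β * b ^ (β - 1) * (c - b) * (b - a) ≤ (b ^ β - a ^ β) * (c - b) := by
    have := mul_le_mul_of_nonneg_right low (show 0 ≤ c - b by linarith)
    nlinarith
  nlinarith [mul_le_mul_of_nonneg_right upp (show 0 ≤ b - a by linarith)]

end bineq

section bineq2
variable {α T r : ℝ} {N : ℕ} (hα0 : 0 < α) (hα1 : α < 1) (hT : 0 < T) (hr : 1 ≤ r) (hN : 0 < N)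
include hα0 hα1 hT hr hN

lemma bcoef_self {k : ℕ} (h1 : 1 ≤ k) :
    bcoef α T r N k k = (gstep T r N k) ^ (-α) / Real.Gamma (2 - α) := by
  have hτ : 0 < gstep T r N k := gstep_pos hT hr hN h1
  rw [bcoef_eq h1 le_rfl]
  have e1 : gmesh T r N k - gmesh T r N (k - 1) = gstep T r N k := rfl
  rw [e1, sub_self, Real.zero_rpow (by linarith), sub_zero]
  rw [show (gstep T r N k) ^ (1-α) / gstep T r N k = (gstep T r N k) ^ (1-α-1) from by
    rw [Real.rpow_sub_one hτ.ne' (1-α)], show (1:ℝ)-α-1 = -α from by ring]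

lemma omega_le_bcoef_one {s : ℕ} (h1 : 1 ≤ s) :
    (gmesh T r N s) ^ (-α) / Real.Gamma (1 - α) ≤ bcoef α T r N s 1 := by
  set β := 1 - α with hβ
  have hβ0 : 0 < β := by simp [hβ]; linarith
  have hβ1 : β ≤ 1 := by simp [hβ]; linarith
  set a := gmesh T r N s - gmesh T r N 1 with hadef
  set b := gmesh T r N s with hbdef
  have hb : 0 < b := gmesh_pos hT hr hN h1
  have hab : a < b := by
    have := gmesh_pos hT hr hN (le_refl 1) (N := N) (T := T) (r := r); simp [hadef]; linarith
  have ha : 0 ≤ a := by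
    rcases Nat.eq_or_lt_of_le h1 with h | h
    · rw [hadef, hbdef, ← h]; simp
    · have := gmesh_lt hT hr hN (show 1 < s from h) (N := N); simp [hadef]; linarith
  rw [bcoef_eq le_rfl h1, show (1:ℕ) - 1 = 0 from rfl, gmesh_zero hT hr hN, sub_zero]
  have hstep : gstep T r N 1 = b - a := by
    unfold gstep; rw [show (1:ℕ)-1 = 0 from rfl, gmesh_zero hT hr hN]; simp [hadef, hbdef]
  rw [hstep, ← hadef, ← hbdef]
  have low := slope_lower hβ0 hβ1 ha hab
  have hΓ1 : 0 < Real.Gamma (1 - α) := Real.Gamma_pos_of_pos (by linarith)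
  have hΓ2 : Real.Gamma (2 - α) = (1 - α) * Real.Gamma (1 - α) := by
    rw [show (2:ℝ) - α = (1 - α) + 1 from by ring, Real.Gamma_add_one (by linarith)]
  have hΓ2p : 0 < Real.Gamma (2 - α) := Gamma2_pos hα0 hα1 hT hr hN (T := T) (r := r) (N := N)
  rw [div_le_div_iff₀ hΓ1 hΓ2p, hΓ2]
  have hlow2 : β * b ^ (-α) ≤ (b ^ β - a ^ β) / (b - a) := by
    rw [le_div_iff₀ (by linarith)]
    calc β * b ^ (-α) * (b - a) = β * b ^ (β - 1) * (b - a) := by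
          rw [show β - 1 = -α from by simp [hβ]]
      _ ≤ b ^ β - a ^ β := low
  calc b ^ (-α) * ((1 - α) * Real.Gamma (1 - α))
      = (β * b ^ (-α)) * Real.Gamma (1 - α) := by rw [hβ]; ring
    _ ≤ ((b ^ β - a ^ β) / (b - a)) * Real.Gamma (1 - α) :=
        mul_le_mul_of_nonneg_right hlow2 hΓ1.le
    _ = (b ^ β - a ^ β) / (b - a) * Real.Gamma (1 - α) := rfl

end bineq2

/-- Auxiliary definition: `pcoefAux α T r N n m` is the coefficient `p^{(n)}_m`,
defined by `p^{(n)}_0 = Γ(2−α) τ_n^α` and, for `m = n - i` with `1 ≤ i ≤ n−1`,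
`p^{(n)}_{n−i} = Γ(2−α) τ_i^α Σ_{k=i+1}^{n} (b^{(k)}_{k−i−1} − b^{(k)}_{k−i}) p^{(n)}_{n−k}`
(the sum over `k ∈ [i+1, n]` is re-indexed by `j = n - k ∈ [0, n-i-1]`). -/
def pcoefAux (α T r : ℝ) (N n : ℕ) : ℕ → ℝ
  | 0 => Real.Gamma (2 - α) * (gstep T r N n) ^ α
  | (m + 1) =>
      Real.Gamma (2 - α) * (gstep T r N (n - (m + 1))) ^ α *
        ∑ j ∈ (Finset.range (m + 1)).attach,
          (bcoef α T r N (n - j.1) (n - m) - bcoef α T r N (n - j.1) (n - (m + 1))) *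
            pcoefAux α T r N n j.1
  decreasing_by
    have := j.2
    simp only [Finset.mem_range] at this
    omega

lemma pcoefAux_succ (α T r : ℝ) (N n m : ℕ) :
    pcoefAux α T r N n (m + 1) =
      Real.Gamma (2 - α) * (gstep T r N (n - (m + 1))) ^ α *
        ∑ j ∈ Finset.range (m + 1),
          (bcoef α T r N (n - j) (n - m) - bcoef α T r N (n - j) (n - (m + 1))) *
            pcoefAux α T r N n j := by
  rw [pcoefAux]
  congr 1
  exact Finset.sum_attach (Finset.range (m + 1))
    (fun j => (bcoef α T r N (n - j) (n - m) - bcoef α T r N (n - j) (n - (m + 1))) *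
      pcoefAux α T r N n j)

section pc
variable {α T r : ℝ} {N : ℕ} (hα0 : 0 < α) (hα1 : α < 1) (hT : 0 < T) (hr : 1 ≤ r) (hN : 0 < N)
include hα0 hα1 hT hr hN

lemma pcoefAux_nonneg {n : ℕ} (hnN : n ≤ N) : ∀ m, m < n → 0 ≤ pcoefAux α T r N n m := by
  intro m
  induction m using Nat.strong_induction_on with
  | _ m ih =>
    intro hm
    cases m with
    | zero =>
      rw [pcoefAux]
      exact mul_nonneg (Gamma2_pos hα0 hα1 hT hr hN (T := T) (r := r) (N := N)).le
        (Real.rpow_nonneg (gstep_pos hT hr hN (show 1 ≤ n by omega)).le α)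
    | succ m =>
      rw [pcoefAux_succ]
      apply mul_nonneg (mul_nonneg (Gamma2_pos hα0 hα1 hT hr hN (T := T) (r := r) (N := N)).le
        (Real.rpow_nonneg (gstep_pos hT hr hN (show 1 ≤ n - (m+1) by omega)).le α))
      apply Finset.sum_nonneg
      intro j hj
      rw [Finset.mem_range] at hj
      apply mul_nonneg _ (ih j (by omega) (by omega))
      have hmono := bcoef_mono hα0 hα1 hT hr hN
        (show 1 ≤ n - (m+1) by omega) (show n - (m+1) + 1 ≤ n - j by omega)
        (T := T) (r := r) (N := N)
      rw [show n - (m+1) + 1 = n - m from by omega] at hmono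
      linarith

lemma pcoef_ident {n : ℕ} (hnN : n ≤ N) :
    ∀ m, m < n → ∑ k ∈ Finset.Icc (n - m) n,
      pcoefAux α T r N n (n - k) * bcoef α T r N k (n - m) = 1 := by
  intro m
  induction m using Nat.strong_induction_on with
  | _ m ih =>
    intro hm
    have hn1 : 1 ≤ n := by omega
    have hΓ : 0 < Real.Gamma (2 - α) := Gamma2_pos hα0 hα1 hT hr hN (T := T) (r := r) (N := N)
    cases m with
    | zero =>
      rw [Nat.sub_zero, Finset.Icc_self, Finset.sum_singleton, Nat.sub_self]
      rw [pcoefAux, bcoef_self hα0 hα1 hT hr hN hn1]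
      have hτ : 0 < gstep T r N n := gstep_pos hT hr hN hn1
      rw [div_eq_mul_inv]
      rw [show Real.Gamma (2-α) * gstep T r N n ^ α * (gstep T r N n ^ (-α) * (Real.Gamma (2-α))⁻¹)
          = (gstep T r N n ^ α * gstep T r N n ^ (-α)) * (Real.Gamma (2-α) * (Real.Gamma (2-α))⁻¹)
          from by ring]
      rw [← Real.rpow_add hτ, add_neg_cancel, Real.rpow_zero, mul_inv_cancel₀ hΓ.ne', one_mul]
    | succ m =>
      set i := n - (m + 1) with hidef
      have hi1 : 1 ≤ i := by omega
      have hin : i + 1 ≤ n := by omega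
      have hsplit : Finset.Icc i n = insert i (Finset.Ioc i n) :=
        (Finset.Ioc_insert_left (by omega)).symm
      rw [hsplit, Finset.sum_insert (by simp)]
      have hni : n - i = m + 1 := by omega
      have hτ : 0 < gstep T r N i := gstep_pos hT hr hN hi1
      rw [bcoef_self hα0 hα1 hT hr hN hi1, hni, pcoefAux_succ]
      have hre : ∑ j ∈ Finset.range (m + 1),
            (bcoef α T r N (n - j) (n - m) - bcoef α T r N (n - j) (n - (m + 1))) *
              pcoefAux α T r N n j
          = ∑ k ∈ Finset.Ioc i n,
            (bcoef α T r N k (i + 1) - bcoef α T r N k i) * pcoefAux α T r N n (n - k) := by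
        apply Finset.sum_nbij' (i := fun j => n - j) (j := fun k => n - k)
        · intro a ha; rw [Finset.mem_range] at ha; rw [Finset.mem_Ioc]; omega
        · intro a ha; rw [Finset.mem_Ioc] at ha; rw [Finset.mem_range]; omega
        · intro a ha; rw [Finset.mem_range] at ha; omega
        · intro a ha; rw [Finset.mem_Ioc] at ha; omega
        · intro a ha; rw [Finset.mem_range] at ha
          rw [show n - m = n - a - (n - a - (i + 1)) from by omega]
          rw [show n - (m + 1) = n - a - (n - a - i) from by omega]
          rw [show n - a - (n - a - (i+1)) = i + 1 from by omega,
            show n - a - (n - a - i) = i from by omega,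
            show n - (n - a) = a from by omega]
      rw [hre]
      rw [show n - (m + 1) = i from hidef.symm]
      have hcol : Real.Gamma (2 - α) * gstep T r N i ^ α *
            (∑ k ∈ Finset.Ioc i n,
              (bcoef α T r N k (i + 1) - bcoef α T r N k i) * pcoefAux α T r N n (n - k)) *
            (gstep T r N i ^ (-α) / Real.Gamma (2 - α))
          = ∑ k ∈ Finset.Ioc i n,
              (bcoef α T r N k (i + 1) - bcoef α T r N k i) * pcoefAux α T r N n (n - k) := by
        rw [show Real.Gamma (2 - α) * gstep T r N i ^ α *
              (∑ k ∈ Finset.Ioc i n,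
                (bcoef α T r N k (i + 1) - bcoef α T r N k i) * pcoefAux α T r N n (n - k)) *
              (gstep T r N i ^ (-α) / Real.Gamma (2 - α))
            = (gstep T r N i ^ α * gstep T r N i ^ (-α)) *
              (Real.Gamma (2 - α) / Real.Gamma (2 - α)) *
              (∑ k ∈ Finset.Ioc i n,
                (bcoef α T r N k (i + 1) - bcoef α T r N k i) * pcoefAux α T r N n (n - k))
            from by ring]
        rw [← Real.rpow_add hτ, add_neg_cancel, Real.rpow_zero, div_self hΓ.ne', one_mul, one_mul]
      rw [hcol]
      have hcomb : ∑ k ∈ Finset.Ioc i n,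
            (bcoef α T r N k (i + 1) - bcoef α T r N k i) * pcoefAux α T r N n (n - k) +
          ∑ k ∈ Finset.Ioc i n, pcoefAux α T r N n (n - k) * bcoef α T r N k i
          = ∑ k ∈ Finset.Ioc i n, pcoefAux α T r N n (n - k) * bcoef α T r N k (i + 1) := by
        rw [← Finset.sum_add_distrib]
        apply Finset.sum_congr rfl
        intro k _; ring
      rw [hcomb, ← Finset.Icc_add_one_left_eq_Ioc]
      have := ih m (by omega) (by omega)
      rw [show n - m = i + 1 from by omega] at this
      exact this

end pc

/-- `pcoef α T r N n i` is the coefficient `p^{(n)}_{n−i}` for `1 ≤ i ≤ n`. -/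
def pcoef (α T r : ℝ) (N n i : ℕ) : ℝ := pcoefAux α T r N n (n - i)

/-- `Σ_{s=1}^{n} p^{(n)}_{n−s} · t_s^{−α}/Γ(1−α) ≤ 1` for `n = 1, …, N`. -/
theorem pcoef_time_weighted_sum_le_one
    (α T r : ℝ) (N : ℕ) (hα0 : 0 < α) (hα1 : α < 1) (hT : 0 < T) (hr : 1 ≤ r) (hN : 0 < N)
    (n : ℕ) (hn1 : 1 ≤ n) (hnN : n ≤ N) :
    ∑ s ∈ Finset.Icc 1 n,
        pcoef α T r N n s * ((gmesh T r N s) ^ (-α) / Real.Gamma (1 - α)) ≤ 1 := by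
  
  have key := pcoef_ident hα0 hα1 hT hr hN hnN (n - 1) (by omega)
  rw [show n - (n - 1) = 1 from by omega] at key
  calc ∑ s ∈ Finset.Icc 1 n,
        pcoef α T r N n s * ((gmesh T r N s) ^ (-α) / Real.Gamma (1 - α))
      ≤ ∑ s ∈ Finset.Icc 1 n, pcoefAux α T r N n (n - s) * bcoef α T r N s 1 := by
        apply Finset.sum_le_sum
        intro s hs
        rw [Finset.mem_Icc] at hs
        unfold pcoef
        exact mul_le_mul_of_nonneg_left (omega_le_bcoef_one hα0 hα1 hT hr hN hs.1)
          (pcoefAux_nonneg hα0 hα1 hT hr hN hnN (n - s) (by omega))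
    _ = 1 := key
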